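/- Let T be a locally finite rooted tree with forward degrees ≥ 2, φ an ultrametric element on T, and μ a fully supported Borel probability measure on ∂T. Define F̃(x,x⁻) = φ(x)/φ(x⁻) for x ≠ o, and recursively F̃(x⁻,x) = (μ(∂T_x)/F̃(o,x⁻)) / (1 − F̃(x,x⁻) + F̃(x,x⁻)μ(∂T_x)/F̃(o,x⁻)) with F̃(o,o) = 1, F̃(o,x) = F̃(o,x⁻)F̃(x⁻,x). Then the transition matrix defined by p(x,y) = (1/G̃(x,x))·F̃(x,y)/(1 − F̃(x,y)F̃(y,x)) for y ∼ x, where G̃(x,x) = 1 + Σ_{y∼x} F̃(x,y)F̃(y,x)/(1 − F̃(x,y)F̃(y,x)), is stochastic: Σ_{y∼x} p(x,y) = 1 for every x. -/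

import Mathlib

set_option linter.unusedSectionVars false


open Filter MeasureTheory

variable {V : Type*} [DecidableEq V]

/-- The ends of a rooted tree, realised as geodesic rays from the root. -/
def Ends (root : V) (par : V → V) : Type _ :=
  {ξ : ℕ → V // ξ 0 = root ∧ ∀ n, par (ξ (n + 1)) = ξ n ∧ ξ (n + 1) ≠ ξ n}

instance (root : V) (par : V → V) : MeasurableSpace (Ends root par) := ⊤

/-- `∂T_x` : the set of ends of the branch at `x`. -/
def branchEnds (root : V) (par : V → V) (x : V) : Set (Ends root par) :=
  {ξ | ∃ n, ξ.1 n = x}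

/-- `F̃(x,x⁻) = φ(x)/φ(x⁻)` for a non-root vertex `x`. -/
noncomputable def Fdown (par : V → V) (φ : V → ℝ) (x : V) : ℝ := φ x / φ (par x)

/-- `F̃(o,x)`, defined recursively by `F̃(o,o) = 1` and `F̃(o,x) = F̃(o,x⁻)F̃(x⁻,x)`,
where `F̃(x⁻,x) = (μ(∂T_x)/F̃(o,x⁻)) / (1 − F̃(x,x⁻) + F̃(x,x⁻)μ(∂T_x)/F̃(o,x⁻))`. -/
noncomputable def Fo (root : V) (par : V → V) (depth : V → ℕ)
    (hd : ∀ x, x ≠ root → depth (par x) < depth x)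
    (φ : V → ℝ) (μB : V → ℝ) (x : V) : ℝ :=
  if h : x = root then 1
  else
    Fo root par depth hd φ μB (par x) *
      ((μB x / Fo root par depth hd φ μB (par x)) /
        (1 - Fdown par φ x +
          Fdown par φ x * (μB x / Fo root par depth hd φ μB (par x))))
termination_by depth x
decreasing_by all_goals exact hd x h

/-- `F̃(x⁻,x)` for a non-root vertex `x`. -/
noncomputable def Fup (root : V) (par : V → V) (depth : V → ℕ)
    (hd : ∀ x, x ≠ root → depth (par x) < depth x)
    (φ : V → ℝ) (μB : V → ℝ) (x : V) : ℝ :=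
  (μB x / Fo root par depth hd φ μB (par x)) /
    (1 - Fdown par φ x + Fdown par φ x * (μB x / Fo root par depth hd φ μB (par x)))

/-- The 'would-be' hitting probabilities `F̃(x,y)` for neighbours `x ∼ y` (and `0` for
non-neighbours). -/
noncomputable def Ft (root : V) (par : V → V) (depth : V → ℕ)
    (hd : ∀ x, x ≠ root → depth (par x) < depth x)
    (φ : V → ℝ) (μB : V → ℝ) (x y : V) : ℝ :=
  if par y = x ∧ y ≠ x then Fup root par depth hd φ μB y
  else if par x = y ∧ x ≠ y then Fdown par φ x
  else 0

/-- The 'would-be' Green function at a vertex,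
`G̃(x,x) = 1 + Σ_{y∼x} F̃(x,y)F̃(y,x)/(1 − F̃(x,y)F̃(y,x))`. -/
noncomputable def Gtd (root : V) (par : V → V) (depth : V → ℕ)
    (hd : ∀ x, x ≠ root → depth (par x) < depth x)
    (φ : V → ℝ) (μB : V → ℝ) (x : V) : ℝ :=
  1 + ∑' y : V, Ft root par depth hd φ μB x y * Ft root par depth hd φ μB y x /
      (1 - Ft root par depth hd φ μB x y * Ft root par depth hd φ μB y x)

/-- The reconstructed transition probabilities
`p(x,y) = (1/G̃(x,x)) · F̃(x,y)/(1 − F̃(x,y)F̃(y,x))`. -/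
noncomputable def pRec (root : V) (par : V → V) (depth : V → ℕ)
    (hd : ∀ x, x ≠ root → depth (par x) < depth x)
    (φ : V → ℝ) (μB : V → ℝ) (x y : V) : ℝ :=
  (1 / Gtd root par depth hd φ μB x) *
    (Ft root par depth hd φ μB x y /
      (1 - Ft root par depth hd φ μB x y * Ft root par depth hd φ μB y x))

section Geom
variable (root : V) (par : V → V) (depth : V → ℕ)
  (hroot : par root = root) (hdepth0 : depth root = 0)
  (hdepth : ∀ x, x ≠ root → depth (par x) + 1 = depth x)
include hroot hdepth0 hdepth

lemma end_ne_root_succ (ξ : Ends root par) (n : ℕ) : ξ.1 (n+1) ≠ root := by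
  intro h
  have h1 := (ξ.2.2 n).1
  have h2 := (ξ.2.2 n).2
  rw [h, hroot] at h1
  rw [h, ← h1] at h2
  exact h2 rfl

lemma end_depth (ξ : Ends root par) : ∀ n, depth (ξ.1 n) = n := by
  intro n; induction n with
  | zero => rw [ξ.2.1, hdepth0]
  | succ n ih =>
    have hne := end_ne_root_succ root par depth hroot hdepth0 hdepth ξ n
    rw [← hdepth _ hne, (ξ.2.2 n).1, ih]

lemma mem_branch_iff (x : V) (ξ : Ends root par) :
    ξ ∈ branchEnds root par x ↔ ξ.1 (depth x) = x := by
  constructor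
  · rintro ⟨n, hn⟩
    have := end_depth root par depth hroot hdepth0 hdepth ξ n
    rw [hn] at this; rw [this]; exact hn
  · intro h; exact ⟨depth x, h⟩

lemma child_ne_root {x y : V} (hpy : par y = x) (hyx : y ≠ x) : y ≠ root := by
  intro h; subst h; rw [hroot] at hpy; exact hyx hpy

lemma branch_decomp (x : V) :
    branchEnds root par x = ⋃ y ∈ {y | par y = x ∧ y ≠ x}, branchEnds root par y := by
  ext ξ
  simp only [Set.mem_iUnion, Set.mem_setOf_eq]
  constructor
  · intro hx
    rw [mem_branch_iff root par depth hroot hdepth0 hdepth] at hx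
    exact ⟨ξ.1 (depth x + 1), ⟨by rw [(ξ.2.2 (depth x)).1, hx],
      fun h => (ξ.2.2 (depth x)).2 (h.trans hx.symm)⟩, ⟨depth x + 1, rfl⟩⟩
  · rintro ⟨y, ⟨hpy, hyx⟩, hy⟩
    rw [mem_branch_iff root par depth hroot hdepth0 hdepth] at hy ⊢
    have hyr : y ≠ root := child_ne_root root par depth hroot hdepth0 hdepth hpy hyx
    have hdy : depth y = depth x + 1 := by rw [← hdepth y hyr, hpy]
    rw [hdy] at hy
    have hdp : depth (par y) = depth x := by rw [hpy]
    rw [← hpy, hdp, ← (ξ.2.2 (depth x)).1, hy]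

lemma branch_disjoint (x : V) : ∀ y ∈ {y | par y = x ∧ y ≠ x}, ∀ z ∈ {y | par y = x ∧ y ≠ x},
    y ≠ z → Disjoint (branchEnds root par y) (branchEnds root par z) := by
  rintro y ⟨hpy, hyx⟩ z ⟨hpz, hzx⟩ hyz
  rw [Set.disjoint_left]
  rintro ξ hy hz
  rw [mem_branch_iff root par depth hroot hdepth0 hdepth] at hy hz
  have hdy : depth y = depth x + 1 := by
    rw [← hdepth y (child_ne_root root par depth hroot hdepth0 hdepth hpy hyx), hpy]
  have hdz : depth z = depth x + 1 := by
    rw [← hdepth z (child_ne_root root par depth hroot hdepth0 hdepth hpz hzx), hpz]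
  rw [hdy] at hy; rw [hdz] at hz
  exact hyz (hy ▸ hz ▸ rfl)

lemma branchEnds_root : branchEnds root par root = Set.univ := by
  ext ξ; simp only [Set.mem_univ, iff_true]; exact ⟨0, ξ.2.1⟩

end Geom

section Meas
variable (root : V) (par : V → V) (depth : V → ℕ)
  (hroot : par root = root) (hdepth0 : depth root = 0)
  (hdepth : ∀ x, x ≠ root → depth (par x) + 1 = depth x)
  (hlocfin : ∀ x : V, {y | par y = x ∧ y ≠ x}.Finite)
  (μ : Measure (Ends root par)) [IsProbabilityMeasure μ]
  (μB : V → ℝ) (hμB : ∀ x, μB x = (μ (branchEnds root par x)).toReal)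
include hroot hdepth0 hdepth hlocfin hμB

lemma μB_root : μB root = 1 := by
  rw [hμB, branchEnds_root root par depth hroot hdepth0 hdepth, measure_univ,
    ENNReal.toReal_one]

lemma μB_sum (x : V) : μB x = ∑ y ∈ (hlocfin x).toFinset, μB y := by
  have hdec : branchEnds root par x
      = ⋃ y ∈ (hlocfin x).toFinset, branchEnds root par y := by
    rw [branch_decomp root par depth hroot hdepth0 hdepth x]
    ext ξ; simp [Set.Finite.mem_toFinset]
  have hmeas : μ (branchEnds root par x)
      = ∑ y ∈ (hlocfin x).toFinset, μ (branchEnds root par y) := by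
    rw [hdec]
    refine measure_biUnion_finset ?_ (fun _ _ => MeasurableSpace.measurableSet_top)
    intro y hy z hz hyz
    simp only [Finset.coe_sort_coe, Set.Finite.coe_toFinset, Set.mem_setOf_eq] at hy hz
    exact branch_disjoint root par depth hroot hdepth0 hdepth x y hy z hz hyz
  rw [hμB, hmeas, ENNReal.toReal_sum (fun y _ => measure_ne_top μ _)]
  exact Finset.sum_congr rfl (fun y _ => (hμB y).symm)

lemma μB_pos (hfull : ∀ x : V, μ (branchEnds root par x) ≠ 0) (x : V) : 0 < μB x := by
  rw [hμB]; exact ENNReal.toReal_pos (hfull x) (measure_ne_top μ _)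

lemma μB_le_parent (hfull : ∀ x : V, μ (branchEnds root par x) ≠ 0)
    (x : V) (hx : x ≠ root) : μB x ≤ μB (par x) := by
  have hxpx : x ≠ par x := by
    intro h
    have := hdepth x hx
    rw [← h] at this; omega
  have hmem : x ∈ (hlocfin (par x)).toFinset := by
    rw [Set.Finite.mem_toFinset]; exact ⟨rfl, hxpx⟩
  rw [μB_sum root par depth hroot hdepth0 hdepth hlocfin μ μB hμB (par x)]
  exact Finset.single_le_sum
    (fun y _ => (μB_pos root par depth hroot hdepth0 hdepth hlocfin μ μB hμB hfull y).le) hmem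

end Meas

lemma alg_facts (a m : ℝ) (ha0 : 0 < a) (ha1 : a < 1) (hm0 : 0 < m) (hm1 : m ≤ 1) :
    0 < 1 - a + a*m ∧ 1 - a + a*m ≤ 1 ∧
    0 < m / (1 - a + a*m) ∧ m / (1 - a + a*m) ≤ 1 ∧
    (m / (1 - a + a*m)) * a < 1 ∧
    (m / (1 - a + a*m)) * (1 - a) / (1 - (m / (1 - a + a*m)) * a) = m ∧
    a * (1 - (m / (1 - a + a*m))) / (1 - a * (m / (1 - a + a*m))) = a * (1 - m) := by
  have hD : 0 < 1 - a + a*m := by nlinarith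
  have hD1 : 1 - a + a*m ≤ 1 := by nlinarith
  have hmD : m ≤ 1 - a + a*m := by nlinarith
  have hu0 : 0 < m / (1 - a + a*m) := div_pos hm0 hD
  have hu1 : m / (1 - a + a*m) ≤ 1 := (div_le_one hD).2 hmD
  have hua : (m / (1 - a + a*m)) * a < 1 := by nlinarith
  have h1ua : 1 - (m / (1 - a + a*m)) * a = (1-a)/(1 - a + a*m) := by
    rw [div_mul_eq_mul_div, one_sub_div hD.ne']
    congr 1; ring
  have h1a : (0:ℝ) < 1 - a := by linarith
  refine ⟨hD, hD1, hu0, hu1, hua, ?_, ?_⟩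
  · rw [h1ua]
    field_simp
  · rw [mul_comm a (m / (1 - a + a*m)), h1ua]
    field_simp
    ring

section Key
variable (root : V) (par : V → V) (depth : V → ℕ)
  (hroot : par root = root) (hdepth0 : depth root = 0)
  (hdepth : ∀ x, x ≠ root → depth (par x) + 1 = depth x)
  (hlocfin : ∀ x : V, {y | par y = x ∧ y ≠ x}.Finite)
  (φ : V → ℝ) (hpos : ∀ x, 0 < φ x)
  (hmono : ∀ x, x ≠ root → φ x < φ (par x))
  (μ : Measure (Ends root par)) [IsProbabilityMeasure μ]
  (hfull : ∀ x : V, μ (branchEnds root par x) ≠ 0)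
  (μB : V → ℝ) (hμB : ∀ x, μB x = (μ (branchEnds root par x)).toReal)
  (hd : ∀ x, x ≠ root → depth (par x) < depth x)

lemma Fo_eq (x : V) (hx : x ≠ root) :
    Fo root par depth hd φ μB x
      = Fo root par depth hd φ μB (par x) * Fup root par depth hd φ μB x := by
  rw [Fo, dif_neg hx]; rfl

include hroot hdepth0 hdepth hlocfin hpos hmono hfull hμB

lemma Fo_key (x : V) :
    0 < Fo root par depth hd φ μB x ∧ μB x ≤ Fo root par depth hd φ μB x := by
  by_cases hx : x = root
  · rw [hx, Fo, dif_pos rfl]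
    exact ⟨one_pos,
      le_of_eq (μB_root root par depth hroot hdepth0 hdepth hlocfin μ μB hμB)⟩
  · obtain ⟨hP, hPle⟩ := Fo_key (par x)
    rw [Fo_eq root par depth φ μB hd x hx]
    set P := Fo root par depth hd φ μB (par x) with hPdef
    set a := Fdown par φ x with ha
    set m := μB x / P with hm
    have ha0 : 0 < a := div_pos (hpos x) (hpos (par x))
    have ha1 : a < 1 := (div_lt_one (hpos (par x))).2 (hmono x hx)
    have hμx : 0 < μB x :=
      μB_pos root par depth hroot hdepth0 hdepth hlocfin μ μB hμB hfull x
    have hm0 : 0 < m := div_pos hμx hP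
    have hm1 : m ≤ 1 := (div_le_one hP).2
      ((μB_le_parent root par depth hroot hdepth0 hdepth hlocfin μ μB hμB hfull
        x hx).trans hPle)
    obtain ⟨hD, hD1, hu0, hu1, -, -, -⟩ := alg_facts a m ha0 ha1 hm0 hm1
    constructor
    · show 0 < P * (m / (1 - a + a * m))
      exact mul_pos hP (div_pos hm0 hD)
    · show μB x ≤ P * (m / (1 - a + a * m))
      have heq : P * (m / (1 - a + a * m)) = μB x / (1 - a + a * m) := by
        rw [hm]; field_simp
      rw [heq, le_div_iff₀ hD]
      nlinarith
termination_by depth x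
decreasing_by exact hd x hx

lemma vertex_facts (x : V) (hx : x ≠ root) :
    0 < Fup root par depth hd φ μB x ∧ Fup root par depth hd φ μB x ≤ 1 ∧
    0 < Fdown par φ x ∧ Fdown par φ x < 1 ∧
    Fup root par depth hd φ μB x * Fdown par φ x < 1 ∧
    Fup root par depth hd φ μB x * (1 - Fdown par φ x) /
      (1 - Fup root par depth hd φ μB x * Fdown par φ x)
      = μB x / Fo root par depth hd φ μB (par x) ∧
    Fdown par φ x * (1 - Fup root par depth hd φ μB x) /
      (1 - Fdown par φ x * Fup root par depth hd φ μB x)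
      = Fdown par φ x * (1 - μB x / Fo root par depth hd φ μB (par x)) := by
  obtain ⟨hP, hPle⟩ :=
    Fo_key root par depth hroot hdepth0 hdepth hlocfin φ hpos hmono μ hfull μB hμB hd (par x)
  set P := Fo root par depth hd φ μB (par x) with hPdef
  set a := Fdown par φ x with ha
  set m := μB x / P with hm
  have ha0 : 0 < a := div_pos (hpos x) (hpos (par x))
  have ha1 : a < 1 := (div_lt_one (hpos (par x))).2 (hmono x hx)
  have hμx : 0 < μB x :=
    μB_pos root par depth hroot hdepth0 hdepth hlocfin μ μB hμB hfull x
  have hm0 : 0 < m := div_pos hμx hP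
  have hm1 : m ≤ 1 := (div_le_one hP).2
    ((μB_le_parent root par depth hroot hdepth0 hdepth hlocfin μ μB hμB hfull
      x hx).trans hPle)
  obtain ⟨hD, hD1, hu0, hu1, hua, he1, he2⟩ := alg_facts a m ha0 ha1 hm0 hm1
  have hFup : Fup root par depth hd φ μB x = m / (1 - a + a * m) := rfl
  rw [hFup]
  exact ⟨hu0, hu1, ha0, ha1, hua, he1, he2⟩

omit hroot hdepth0 hdepth hlocfin hpos hmono hfull hμB in
lemma final_step (x : V) (t : Finset V)
    (hzero : ∀ y ∉ t, Ft root par depth hd φ μB x y = 0)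
    (hfacts : ∀ y ∈ t, 0 ≤ Ft root par depth hd φ μB x y ∧
      0 ≤ Ft root par depth hd φ μB y x ∧
      Ft root par depth hd φ μB x y * Ft root par depth hd φ μB y x < 1)
    (hS1 : ∑ y ∈ t, Ft root par depth hd φ μB x y *
        (1 - Ft root par depth hd φ μB y x) /
        (1 - Ft root par depth hd φ μB x y * Ft root par depth hd φ μB y x) = 1) :
    ∑' y, pRec root par depth hd φ μB x y = 1 := by
  set F := Ft root par depth hd φ μB with hFdef
  set A := ∑ y ∈ t, F x y * F y x / (1 - F x y * F y x) with hA
  have hA0 : 0 ≤ A := by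
    refine Finset.sum_nonneg (fun y hy => ?_)
    obtain ⟨h1, h2, h3⟩ := hfacts y hy
    exact div_nonneg (mul_nonneg h1 h2) (by linarith)
  have hGtd : Gtd root par depth hd φ μB x = 1 + A := by
    rw [Gtd]
    congr 1
    refine tsum_eq_sum (fun y hy => ?_)
    rw [← hFdef, hzero y hy]
    simp
  have hB : ∑ y ∈ t, F x y / (1 - F x y * F y x) = 1 + A := by
    have hsplit : ∀ y ∈ t, F x y / (1 - F x y * F y x)
        = F x y * (1 - F y x) / (1 - F x y * F y x)
          + F x y * F y x / (1 - F x y * F y x) := by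
      intro y hy
      obtain ⟨h1, h2, h3⟩ := hfacts y hy
      have hden : (1 : ℝ) - F x y * F y x ≠ 0 := by linarith
      rw [← add_div]
      congr 1
      ring
    rw [Finset.sum_congr rfl hsplit, Finset.sum_add_distrib, hS1, ← hA]
  have hGpos : (0:ℝ) < 1 + A := by linarith
  have hps : ∑' y, pRec root par depth hd φ μB x y
      = ∑ y ∈ t, pRec root par depth hd φ μB x y := by
    refine tsum_eq_sum (fun y hy => ?_)
    rw [pRec, ← hFdef, hzero y hy]
    simp
  rw [hps]
  have : ∀ y, pRec root par depth hd φ μB x y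
      = (1 / Gtd root par depth hd φ μB x) * (F x y / (1 - F x y * F y x)) := fun y => rfl
  simp_rw [this]
  rw [← Finset.mul_sum, hB, hGtd, one_div, inv_mul_cancel₀ (by linarith)]

end Key

/-- Let `T` be a locally finite rooted tree with forward degrees `≥ 2`, `φ` an
ultrametric element on `T`, and `μ` a fully supported Borel probability measure on
`∂T`.  Then the transition matrix reconstructed from `φ` and `μ` via the recursion of
Theorem II is stochastic: `Σ_{y} p(x,y) = 1` for every `x`. -/
theorem stmt_17 (root : V) (par : V → V) (depth : V → ℕ)
    (hroot : par root = root) (hdepth0 : depth root = 0)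
    (hdepth : ∀ x, x ≠ root → depth (par x) + 1 = depth x)
    (hlocfin : ∀ x : V, {y | par y = x ∧ y ≠ x}.Finite)
    (hdeg : ∀ x : V, ∃ y z : V, y ≠ z ∧ par y = x ∧ par z = x ∧ y ≠ x ∧ z ≠ x)
    (φ : V → ℝ) (hpos : ∀ x, 0 < φ x)
    (hmono : ∀ x, x ≠ root → φ x < φ (par x))
    (hlim : ∀ ξ : Ends root par, Tendsto (fun n => φ (ξ.1 n)) atTop (nhds 0))
    (μ : Measure (Ends root par)) [IsProbabilityMeasure μ]
    (hfull : ∀ x : V, μ (branchEnds root par x) ≠ 0)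
    (μB : V → ℝ) (hμB : ∀ x, μB x = (μ (branchEnds root par x)).toReal)
    (hd : ∀ x, x ≠ root → depth (par x) < depth x) :
    ∀ x : V, ∑' y : V, pRec root par depth hd φ μB x y = 1 := by
  intro x
  classical
  have hkeyf := Fo_key root par depth hroot hdepth0 hdepth hlocfin φ hpos hmono μ hfull μB hμB hd
  have hvf := vertex_facts root par depth hroot hdepth0 hdepth hlocfin φ hpos hmono μ hfull μB hμB hd
  set s := (hlocfin x).toFinset with hs
  have hchild : ∀ y ∈ s, par y = x ∧ y ≠ x := by
    intro y hy
    rw [hs, Set.Finite.mem_toFinset] at hy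
    exact hy
  have hmem_s : ∀ y, par y = x → y ≠ x → y ∈ s := by
    intro y h1 h2
    rw [hs, Set.Finite.mem_toFinset]
    exact ⟨h1, h2⟩
  have hmutual : ∀ y, par y = x → y ≠ x → ¬(par x = y ∧ x ≠ y) := by
    rintro y hpy hyx ⟨hpx, hxy⟩
    have hyr : y ≠ root := child_ne_root root par depth hroot hdepth0 hdepth hpy hyx
    by_cases hxr : x = root
    · rw [hxr, hroot] at hpx; exact hyr hpx.symm
    · have h1 := hdepth x hxr
      have h2 := hdepth y hyr
      rw [hpx] at h1; rw [hpy] at h2; omega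
  have hFxy : ∀ y ∈ s, Ft root par depth hd φ μB x y = Fup root par depth hd φ μB y := by
    intro y hy
    rw [Ft, if_pos (hchild y hy)]
  have hFyx : ∀ y ∈ s, Ft root par depth hd φ μB y x = Fdown par φ y := by
    intro y hy
    obtain ⟨h1, h2⟩ := hchild y hy
    rw [Ft, if_neg (hmutual y h1 h2), if_pos ⟨h1, h2⟩]
  have hterm : ∀ y ∈ s, Ft root par depth hd φ μB x y *
      (1 - Ft root par depth hd φ μB y x) /
      (1 - Ft root par depth hd φ μB x y * Ft root par depth hd φ μB y x)
      = μB y / Fo root par depth hd φ μB x := by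
    intro y hy
    obtain ⟨h1, h2⟩ := hchild y hy
    have hyr : y ≠ root := child_ne_root root par depth hroot hdepth0 hdepth h1 h2
    obtain ⟨hu0, hu1, ha0, ha1, hua, he1, he2⟩ := hvf y hyr
    rw [hFxy y hy, hFyx y hy]
    rw [h1] at he1
    exact he1
  have hfacts_s : ∀ y ∈ s, 0 ≤ Ft root par depth hd φ μB x y ∧
      0 ≤ Ft root par depth hd φ μB y x ∧
      Ft root par depth hd φ μB x y * Ft root par depth hd φ μB y x < 1 := by
    intro y hy
    obtain ⟨h1, h2⟩ := hchild y hy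
    have hyr : y ≠ root := child_ne_root root par depth hroot hdepth0 hdepth h1 h2
    obtain ⟨hu0, hu1, ha0, ha1, hua, he1, he2⟩ := hvf y hyr
    rw [hFxy y hy, hFyx y hy]
    exact ⟨hu0.le, ha0.le, hua⟩
  have hsum_s : ∑ y ∈ s, μB y / Fo root par depth hd φ μB x
      = μB x / Fo root par depth hd φ μB x := by
    rw [← Finset.sum_div, ← μB_sum root par depth hroot hdepth0 hdepth hlocfin μ μB hμB x]
  by_cases hxr : x = root
  · -- root case
    have hFo1 : Fo root par depth hd φ μB x = 1 := by rw [hxr, Fo, dif_pos rfl]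
    have hzero : ∀ y ∉ s, Ft root par depth hd φ μB x y = 0 := by
      intro y hy
      rw [Ft, if_neg (fun h => hy (hmem_s y h.1 h.2)), if_neg ?_]
      rintro ⟨h1, h2⟩
      rw [hxr, hroot] at h1
      exact h2 (hxr.trans h1)
    have hS1 : ∑ y ∈ s, Ft root par depth hd φ μB x y *
        (1 - Ft root par depth hd φ μB y x) /
        (1 - Ft root par depth hd φ μB x y * Ft root par depth hd φ μB y x) = 1 := by
      rw [Finset.sum_congr rfl hterm, hsum_s, hFo1, div_one, hxr,
        μB_root root par depth hroot hdepth0 hdepth hlocfin μ μB hμB]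
    exact final_step root par depth φ μB hd x s hzero hfacts_s hS1
  · -- non-root case
    have hxpx : x ≠ par x := by
      intro h
      have := hdepth x hxr
      rw [← h] at this; omega
    have hparnot : par x ∉ s := fun h =>
      hmutual (par x) ((hchild _ h).1) ((hchild _ h).2) ⟨rfl, hxpx⟩
    set t := insert (par x) s with htdef
    have hzero : ∀ y ∉ t, Ft root par depth hd φ μB x y = 0 := by
      intro y hy
      have hy1 : y ≠ par x := fun h => hy (h ▸ Finset.mem_insert_self _ _)
      have hy2 : y ∉ s := fun h => hy (Finset.mem_insert_of_mem h)
      rw [Ft, if_neg (fun h => hy2 (hmem_s y h.1 h.2)), if_neg ?_]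
      rintro ⟨h1, h2⟩
      exact hy1 h1.symm
    have hFxp : Ft root par depth hd φ μB x (par x) = Fdown par φ x := by
      rw [Ft, if_neg ?_, if_pos ⟨rfl, hxpx⟩]
      rintro ⟨h1, h2⟩
      exact hmutual (par x) h1 h2 ⟨rfl, hxpx⟩
    have hFpx : Ft root par depth hd φ μB (par x) x = Fup root par depth hd φ μB x := by
      rw [Ft, if_pos ⟨rfl, hxpx⟩]
    obtain ⟨hu0, hu1, ha0, ha1, hua, he1, he2⟩ := hvf x hxr
    -- facts on the whole neighbour set
    have hfacts : ∀ y ∈ t, 0 ≤ Ft root par depth hd φ μB x y ∧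
        0 ≤ Ft root par depth hd φ μB y x ∧
        Ft root par depth hd φ μB x y * Ft root par depth hd φ μB y x < 1 := by
      intro y hy
      rcases Finset.mem_insert.1 hy with h | h
      · subst h
        rw [hFxp, hFpx]
        exact ⟨ha0.le, hu0.le, by rw [mul_comm]; exact hua⟩
      · exact hfacts_s y h
    -- quantitative facts at x
    obtain ⟨hP, hPle⟩ := hkeyf (par x)
    have hμx : 0 < μB x :=
      μB_pos root par depth hroot hdepth0 hdepth hlocfin μ μB hμB hfull x
    have hm0 : 0 < μB x / Fo root par depth hd φ μB (par x) := div_pos hμx hP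
    have hm1 : μB x / Fo root par depth hd φ μB (par x) ≤ 1 := (div_le_one hP).2
      ((μB_le_parent root par depth hroot hdepth0 hdepth hlocfin μ μB hμB hfull
        x hxr).trans hPle)
    obtain ⟨hD, hD1, -, -, -, -, -⟩ := alg_facts (Fdown par φ x)
      (μB x / Fo root par depth hd φ μB (par x)) ha0 ha1 hm0 hm1
    have hFox : Fo root par depth hd φ μB x
        = μB x / (1 - Fdown par φ x + Fdown par φ x *
            (μB x / Fo root par depth hd φ μB (par x))) := by
      rw [Fo_eq root par depth φ μB hd x hxr]
      show Fo root par depth hd φ μB (par x) *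
        ((μB x / Fo root par depth hd φ μB (par x)) /
          (1 - Fdown par φ x + Fdown par φ x *
            (μB x / Fo root par depth hd φ μB (par x)))) = _
      field_simp
    have hMB : μB x / Fo root par depth hd φ μB x
        = 1 - Fdown par φ x + Fdown par φ x *
            (μB x / Fo root par depth hd φ μB (par x)) := by
      rw [hFox]
      field_simp
    have hS1 : ∑ y ∈ t, Ft root par depth hd φ μB x y *
        (1 - Ft root par depth hd φ μB y x) /
        (1 - Ft root par depth hd φ μB x y * Ft root par depth hd φ μB y x) = 1 := by
      rw [htdef, Finset.sum_insert hparnot, Finset.sum_congr rfl hterm, hsum_s,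
        hFxp, hFpx, he2, hMB]
      ring
    exact final_step root par depth φ μB hd x t hzero hfacts hS1
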